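/- (Proposition: reweighted operator identity.) Under the joint density setup with operator A as above and RKHS H_X, H_Y with kernels k, l satisfying the integrability conditions (E[k(X,X)] < ∞, E[l(Y,Y)] < ∞): if Af ∈ H_Y for f ∈ H_X, then C_YY(Af) = C_YX f, where C_YY = E[ψ(Y) ⊗ ψ(Y)] and C_YX = E[ψ(Y) ⊗ φ(X)]. Formally: for all g ∈ H_Y, ⟨C_YY(Af), g⟩_{H_Y} = ⟨C_YX f, g⟩_{H_Y}. -/

import Mathlib

open MeasureTheory
open scoped InnerProductSpace

/-- Reweighted operator identity: if Af ∈ H_Y, then C_YY (Af) = C_YX f, where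
    ⟨C_YY h, g⟩ = E[h(Y)g(Y)] = ∫ h(y)g(y)ν(y)dy and
    ⟨C_YX f, g⟩ = E[f(X)g(Y)] = ∬ f(x)g(y)p(x,y)dxdy, and
    (Af)(y) = (1/ν(y)) ∫ p(x,y) f(x) dx. -/
theorem stmt_11 {𝒳 𝒴 : Type*} [MeasurableSpace 𝒳] [MeasurableSpace 𝒴]
    {HX HY : Type*} [NormedAddCommGroup HX] [InnerProductSpace ℝ HX]
    [NormedAddCommGroup HY] [InnerProductSpace ℝ HY]
    (mX : Measure 𝒳) (mY : Measure 𝒴) [SFinite mX] [SFinite mY]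
    (p : 𝒳 → 𝒴 → ℝ) (ν : 𝒴 → ℝ) (hν : ∀ y, ν y ≠ 0)
    (evX : HX → 𝒳 → ℝ) (evY : HY → 𝒴 → ℝ)
    (CYY : HY → HY) (CYX : HX → HY)
    (hCYY : ∀ h g : HY, ⟪CYY h, g⟫_ℝ = ∫ y, evY h y * evY g y * ν y ∂mY)
    (hCYX : ∀ (f : HX) (g : HY),
      ⟪CYX f, g⟫_ℝ = ∫ z : 𝒳 × 𝒴, evX f z.1 * evY g z.2 * p z.1 z.2 ∂(mX.prod mY))
    (f : HX) (Af : HY)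
    (hAf : ∀ y, evY Af y = (ν y)⁻¹ * ∫ x, p x y * evX f x ∂mX)
    (hint : ∀ g : HY,
      Integrable (fun z : 𝒳 × 𝒴 => evX f z.1 * evY g z.2 * p z.1 z.2) (mX.prod mY)) :
    ∀ g : HY, ⟪CYY Af, g⟫_ℝ = ⟪CYX f, g⟫_ℝ := by
  intro g
  rw [hCYY, hCYX, MeasureTheory.integral_prod_symm _ (hint g)]
  refine integral_congr_ae (Filter.Eventually.of_forall fun y => ?_)
  simp only [hAf]
  have : ∫ x, evX f x * evY g y * p x y ∂mX
      = (∫ x, p x y * evX f x ∂mX) * evY g y := by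
    rw [← integral_mul_const]
    refine integral_congr_ae (Filter.Eventually.of_forall fun x => ?_)
    ring
  rw [this]
  field_simp
  rw [mul_comm (ν y), mul_assoc, mul_div_assoc, mul_div_cancel_left₀ _ (hν y)]
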